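/- Let A be a finitary abelian category over a finite field, and let (E₁,E₂) be an orthogonal exceptional pair associated to an exceptional object E (i.e., F_{E₁E₂}^Z = 1 if Z ≅ E or Z ≅ E₁⊕E₂ and 0 otherwise, and F_{E₂E₁}^Z = 1 if Z ≅ E₁⊕E₂ and 0 otherwise). Then for any objects X, X′: F_{X′E}^X = Σ_{[Z₁]} F_{X′E₁}^{Z₁} F_{Z₁E₂}^X − Σ_{[Z₂]} F_{X′E₂}^{Z₂} F_{Z₂E₁}^X. -/

import Mathlib

open CategoryTheory CategoryTheory.Limits
open Classical

/-- The Hall number `F_{AB}^M`: the number of subobjects `X ⊆ M` with `X ≅ B` and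
`M/X ≅ A`. -/
noncomputable def hallNumber {C : Type*} [Category C] [Abelian C] (A B M : C) : ℕ :=
  Nat.card {X : Subobject M // Nonempty ((X : C) ≅ B) ∧ Nonempty (cokernel X.arrow ≅ A)}

set_option linter.unusedSectionVars false

namespace HallRecAux

open CategoryTheory.Subobject

variable {C : Type*} [Category C] [Abelian C]

/-! ### Basic abelian category lemmas -/

/-- An epimorphism is the cokernel of its kernel. -/
noncomputable def cokernelKernelιIso {X Z : C} (f : X ⟶ Z) [Epi f] :
    cokernel (kernel.ι f) ≅ Z :=
  IsColimit.coconePointUniqueUpToIso (colimit.isColimit _)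
    (Abelian.epiIsCokernelOfKernel _ (kernelIsKernel f))

/-- `cokernel (Subobject.mk g).arrow ≅ cokernel g`. -/
noncomputable def cokernelMkArrowIso {A X : C} (g : A ⟶ X) [Mono g] :
    cokernel (Subobject.mk g).arrow ≅ cokernel g :=
  (cokernelEpiComp (Subobject.underlyingIso g).inv (Subobject.mk g).arrow).symm ≪≫
    cokernelIsoOfEq (Subobject.underlyingIso_arrow g)

noncomputable def cokernelArrowIsoOfEq {X : C} {P Q : Subobject X} (h : P = Q) :
    cokernel P.arrow ≅ cokernel Q.arrow := by subst h; exact Iso.refl _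

/-- For an epi `f : X ⟶ Z`, the cokernel of the inclusion of its kernel subobject is `Z`. -/
noncomputable def cokernelKernelSubobjectArrowIso {X Z : C} (f : X ⟶ Z) [Epi f] :
    cokernel (kernelSubobject f).arrow ≅ Z :=
  cokernelMkArrowIso (kernel.ι f) ≪≫ cokernelKernelιIso f

/-- A mono is the kernel of its cokernel, subobject version. -/
lemma kernelSubobject_cokernelπ {A X : C} (i : A ⟶ X) [Mono i] :
    kernelSubobject (cokernel.π i) = Subobject.mk i := by
  refine le_antisymm ?_ ?_
  · exact Subobject.le_mk_of_comm
      (Abelian.monoLift i (kernelSubobject (cokernel.π i)).arrow (kernelSubobject_arrow_comp _))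
      (Abelian.monoLift_comp _ _ _)
  · refine le_kernelSubobject _ _ ?_
    rw [← Subobject.underlyingIso_hom_comp_eq_mk i, Category.assoc, cokernel.condition,
      comp_zero]

lemma kernelSubobject_cokernelπ_arrow {X : C} (W : Subobject X) :
    kernelSubobject (cokernel.π W.arrow) = W := by
  rw [kernelSubobject_cokernelπ, Subobject.mk_arrow]

/-- If `e ≫ t` factors through a subobject and `e` is epi, then `t` does. -/
lemma factors_of_epi_comp {P K Q : C} (e : P ⟶ K) [Epi e] {t : K ⟶ Q}
    (S : Subobject Q) (h : S.Factors (e ≫ t)) : S.Factors t := by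
  haveI := strongEpi_of_epi e
  have sq : CommSq (S.factorThru _ h) e S.arrow t := ⟨by simp⟩
  rw [← sq.fac_right]
  exact Subobject.factors_comp_arrow _

/-- Exactness: the image under `q` of the kernel of `q ≫ cokernel.π W.arrow` is `W`,
for an epi `q`. -/
lemma imageSubobject_kernelSubobject_eq {X Q : C} (q : X ⟶ Q) [Epi q] (W : Subobject Q) :
    imageSubobject ((kernelSubobject (q ≫ cokernel.π W.arrow)).arrow ≫ q) = W := by
  have hW := kernelSubobject_cokernelπ_arrow W
  refine le_antisymm ?_ ?_
  · have hf : W.Factors ((kernelSubobject (q ≫ cokernel.π W.arrow)).arrow ≫ q) := by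
      have h1 := kernelSubobject_factors (cokernel.π W.arrow)
        ((kernelSubobject (q ≫ cokernel.π W.arrow)).arrow ≫ q)
        (by rw [Category.assoc, kernelSubobject_arrow_comp])
      rwa [hW] at h1
    exact imageSubobject_le _ (W.factorThru _ hf) (W.factorThru_arrow _ _)
  · have hcond : pullback.fst q W.arrow ≫ q ≫ cokernel.π W.arrow = 0 := by
      rw [← Category.assoc, pullback.condition, Category.assoc, cokernel.condition, comp_zero]
    have hu := factorThruKernelSubobject_comp_arrow (q ≫ cokernel.π W.arrow)
      (pullback.fst q W.arrow) hcond
    have key : (imageSubobject ((kernelSubobject (q ≫ cokernel.π W.arrow)).arrow ≫ q)).Factors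
        (pullback.snd q W.arrow ≫ W.arrow) := by
      rw [← pullback.condition, ← hu, Category.assoc]
      exact imageSubobject_factors_comp_self _ _
    have h2 := factors_of_epi_comp (pullback.snd q W.arrow) _ key
    exact Subobject.le_of_comm (Subobject.factorThru _ _ h2) (Subobject.factorThru_arrow _ _ _)

/-- Exactness: if `e' : Y' ⟶ W` is an epi over an epi `q` whose kernel is contained in `Y'`,
then the kernel of `q ≫ cokernel.π W.arrow` is `Y'`. -/
lemma kernelSubobject_comp_cokernelπ_eq {X Q : C} (q : X ⟶ Q) [Epi q]
    (Y' : Subobject X) (hq : kernelSubobject q ≤ Y') (W : Subobject Q)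
    (e' : (Y' : C) ⟶ (W : C)) [Epi e'] (he' : e' ≫ W.arrow = Y'.arrow ≫ q) :
    kernelSubobject (q ≫ cokernel.π W.arrow) = Y' := by
  refine le_antisymm ?_ (le_kernelSubobject _ _ ?_)
  · have h0 : ((kernelSubobject (q ≫ cokernel.π W.arrow)).arrow ≫ q) ≫ cokernel.π W.arrow
        = 0 := by
      rw [Category.assoc]; exact kernelSubobject_arrow_comp _
    have hWfac : W.Factors ((kernelSubobject (q ≫ cokernel.π W.arrow)).arrow ≫ q) := by
      have h1 := kernelSubobject_factors (cokernel.π W.arrow) _ h0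
      rwa [kernelSubobject_cokernelπ_arrow] at h1
    obtain ⟨v, hva⟩ : ∃ v, v ≫ W.arrow
        = (kernelSubobject (q ≫ cokernel.π W.arrow)).arrow ≫ q :=
      ⟨_, W.factorThru_arrow _ hWfac⟩
    have hcomm : pullback.snd e' v ≫
          (kernelSubobject (q ≫ cokernel.π W.arrow)).arrow ≫ q
        = pullback.fst e' v ≫ Y'.arrow ≫ q := by
      rw [← hva, ← Category.assoc, ← pullback.condition, Category.assoc, he']
    have hdiff : (pullback.snd e' v ≫
          (kernelSubobject (q ≫ cokernel.π W.arrow)).arrow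
        - pullback.fst e' v ≫ Y'.arrow) ≫ q = 0 := by
      rw [Preadditive.sub_comp, Category.assoc, Category.assoc, hcomm, sub_self]
    have hfac : Y'.Factors (pullback.snd e' v ≫
        (kernelSubobject (q ≫ cokernel.π W.arrow)).arrow) := by
      have h1 : Y'.Factors (pullback.snd e' v ≫
            (kernelSubobject (q ≫ cokernel.π W.arrow)).arrow
          - pullback.fst e' v ≫ Y'.arrow) :=
        Subobject.factors_of_le _ hq (kernelSubobject_factors _ _ hdiff)
      have h2 : Y'.Factors (pullback.fst e' v ≫ Y'.arrow) :=
        Subobject.factors_comp_arrow _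
      have h3 := Subobject.factors_add _ _ h1 h2
      rwa [sub_add_cancel] at h3
    have h4 := factors_of_epi_comp (pullback.snd e' v) _ hfac
    exact Subobject.le_of_comm (Subobject.factorThru _ _ h4) (Subobject.factorThru_arrow _ _ _)
  · rw [← Category.assoc, ← he', Category.assoc, cokernel.condition, comp_zero]

/-- Exactness: the kernel of `q ≫ cokernel.π (image (Y'.arrow ≫ q)).arrow` is `Y'`,
for an epi `q` whose kernel is contained in `Y'`. -/
lemma kernelSubobject_imageSubobject_eq {X Q : C} (q : X ⟶ Q) [Epi q] (Y' : Subobject X)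
    (hq : kernelSubobject q ≤ Y') :
    kernelSubobject (q ≫ cokernel.π (imageSubobject (Y'.arrow ≫ q)).arrow) = Y' :=
  kernelSubobject_comp_cokernelπ_eq q Y' hq _ _ (imageSubobject_arrow_comp _)

/-- The second isomorphism theorem: `Y'/Y ≅ W` when `e' : Y' ⟶ W` is an epi lying over
an epi `q` with kernel `Y`. -/
noncomputable def cokernelOfLEIsoOfEpi {X Q : C} (q : X ⟶ Q) (Y Y' : Subobject X)
    (hle : Y ≤ Y') (hYq : kernelSubobject q = Y) (W : Subobject Q)
    (e' : (Y' : C) ⟶ (W : C)) [Epi e'] (he' : e' ≫ W.arrow = Y'.arrow ≫ q) :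
    cokernel (Subobject.ofLE Y Y' hle) ≅ (W : C) := by
  have hker : kernelSubobject e' = Subobject.mk (Subobject.ofLE Y Y' hle) := by
    refine le_antisymm ?_ ?_
    · have h1 : ((kernelSubobject e').arrow ≫ Y'.arrow) ≫ q = 0 := by
        rw [Category.assoc, ← he', ← Category.assoc, kernelSubobject_arrow_comp, zero_comp]
      have hYfac : Y.Factors ((kernelSubobject e').arrow ≫ Y'.arrow) := by
        have h2 := kernelSubobject_factors q _ h1
        rwa [hYq] at h2
      refine Subobject.le_mk_of_comm (Y.factorThru _ hYfac) ?_
      rw [← cancel_mono Y'.arrow, Category.assoc, Subobject.ofLE_arrow,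
        Subobject.factorThru_arrow]
    · refine le_kernelSubobject _ _ ?_
      have h2 : Subobject.ofLE Y Y' hle ≫ e' = 0 := by
        rw [← cancel_mono W.arrow, Category.assoc, he', ← Category.assoc,
          Subobject.ofLE_arrow, zero_comp, ← hYq, kernelSubobject_arrow_comp]
      rw [← Subobject.underlyingIso_hom_comp_eq_mk, Category.assoc, h2, comp_zero]
  exact (cokernelMkArrowIso _).symm ≪≫ cokernelArrowIsoOfEq hker.symm ≪≫
    cokernelKernelSubobjectArrowIso e'

/-- The second isomorphism: `Y'/Y ≅ image of Y' in X/Y`. -/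
noncomputable def cokernelOfLEIso {X : C} (Y Y' : Subobject X) (hle : Y ≤ Y') :
    cokernel (Subobject.ofLE Y Y' hle) ≅
      ((imageSubobject (Y'.arrow ≫ cokernel.π Y.arrow)) : C) :=
  cokernelOfLEIsoOfEpi (cokernel.π Y.arrow) Y Y' hle (kernelSubobject_cokernelπ_arrow Y) _
    (factorThruImageSubobject _) (imageSubobject_arrow_comp _)

/-! ### Finiteness -/

section Finiteness

variable [∀ X Y : C, Finite (X ⟶ Y)]

lemma finite_isoClass (B M : C) : Finite {Y : Subobject M // Nonempty ((Y : C) ≅ B)} := by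
  refine Finite.of_surjective
    (fun g : {g : B ⟶ M // Mono g} =>
      haveI := g.2
      (⟨Subobject.mk g.1, ⟨Subobject.underlyingIso g.1⟩⟩ :
        {Y : Subobject M // Nonempty ((Y : C) ≅ B)})) ?_
  rintro ⟨Y, ⟨e⟩⟩
  refine ⟨⟨e.inv ≫ Y.arrow, mono_comp _ _⟩, Subtype.ext ?_⟩
  exact (Subobject.mk_eq_mk_of_comm _ _ e.symm rfl).trans (Subobject.mk_arrow Y)

lemma finite_sset (A B M : C) :
    Finite {Y : Subobject M // Nonempty ((Y : C) ≅ B) ∧ Nonempty (cokernel Y.arrow ≅ A)} := by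
  haveI := finite_isoClass B M
  exact Finite.of_injective
    (fun Y : {Y : Subobject M // Nonempty ((Y : C) ≅ B) ∧ Nonempty (cokernel Y.arrow ≅ A)} =>
      (⟨Y.1, Y.2.1⟩ : {Y : Subobject M // Nonempty ((Y : C) ≅ B)}))
    (fun a b h => Subtype.ext (by simpa using congrArg Subtype.val h))

end Finiteness

/-! ### Invariance of Hall numbers under isomorphism -/

lemma mk_comp_hom_comp_inv_eq {M M' : C} (e : M ≅ M') (Y : Subobject M) :
    Subobject.mk ((Subobject.mk (Y.arrow ≫ e.hom)).arrow ≫ e.inv) = Y := by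
  have h : (Subobject.underlyingIso (Y.arrow ≫ e.hom)).hom ≫ Y.arrow
      = (Subobject.mk (Y.arrow ≫ e.hom)).arrow ≫ e.inv := by
    rw [← Subobject.underlyingIso_hom_comp_eq_mk, Category.assoc, Category.assoc,
      e.hom_inv_id, Category.comp_id]
  exact (Subobject.mk_eq_mk_of_comm _ _ (Subobject.underlyingIso (Y.arrow ≫ e.hom)) h).trans
    (Subobject.mk_arrow Y)

/-- Transporting subobjects (with iso class and quotient conditions) along an isomorphism. -/
noncomputable def ssetMap {M M' : C} (e : M ≅ M') (A B : C)
    (Y : {Y : Subobject M // Nonempty ((Y : C) ≅ B) ∧ Nonempty (cokernel Y.arrow ≅ A)}) :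
    {Y : Subobject M' // Nonempty ((Y : C) ≅ B) ∧ Nonempty (cokernel Y.arrow ≅ A)} :=
  ⟨Subobject.mk (Y.1.arrow ≫ e.hom),
    Y.2.1.map fun i => Subobject.underlyingIso (Y.1.arrow ≫ e.hom) ≪≫ i,
    Y.2.2.map fun i => (cokernelMkArrowIso (Y.1.arrow ≫ e.hom)) ≪≫
      cokernelCompIsIso (Y.1.arrow) e.hom ≪≫ i⟩

noncomputable def ssetEquiv {M M' : C} (e : M ≅ M') (A B : C) :
    {Y : Subobject M // Nonempty ((Y : C) ≅ B) ∧ Nonempty (cokernel Y.arrow ≅ A)} ≃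
    {Y : Subobject M' // Nonempty ((Y : C) ≅ B) ∧ Nonempty (cokernel Y.arrow ≅ A)} where
  toFun := ssetMap e A B
  invFun := ssetMap e.symm A B
  left_inv Y := Subtype.ext (mk_comp_hom_comp_inv_eq e Y.1)
  right_inv Y := Subtype.ext (mk_comp_hom_comp_inv_eq e.symm Y.1)

lemma hallNumber_congr_M {A B M M' : C} (e : M ≅ M') :
    hallNumber A B M = hallNumber A B M' :=
  Nat.card_congr (ssetEquiv e A B)

/-! ### Skeleton -/

lemma toSkeleton_eq_iff {A : C} {Z : Skeleton C} :
    toSkeleton A = Z ↔ Nonempty (A ≅ (fromSkeleton C).obj Z) :=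
  Quotient.mk_eq_iff_out

/-! ### The summation lemma -/

section Counting

variable [∀ X Y : C, Finite (X ⟶ Y)]

lemma finsum_hall_eq_card (X X' B Cm : C) :
    (∑ᶠ Z : Skeleton C, (hallNumber X' Cm ((fromSkeleton C).obj Z) : ℤ) *
        (hallNumber ((fromSkeleton C).obj Z) B X : ℤ))
      = (Nat.card ((Y : {Y : Subobject X // Nonempty ((Y : C) ≅ B)}) ×
          {W : Subobject (cokernel Y.1.arrow) //
            Nonempty ((W : C) ≅ Cm) ∧ Nonempty (cokernel W.arrow ≅ X')}) : ℤ) := by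
  classical
  haveI := finite_isoClass (C := C) B X
  haveI : Fintype {Y : Subobject X // Nonempty ((Y : C) ≅ B)} := Fintype.ofFinite _
  let α := {Y : Subobject X // Nonempty ((Y : C) ≅ B)}
  let g : α → Skeleton C := fun Y => toSkeleton (cokernel Y.1.arrow)
  have card_fiber : ∀ Z : Skeleton C, hallNumber ((fromSkeleton C).obj Z) B X
      = (Finset.univ.filter (fun Y : α => g Y = Z)).card := by
    intro Z
    have eFib : {Y : Subobject X // Nonempty ((Y : C) ≅ B) ∧
        Nonempty (cokernel Y.arrow ≅ (fromSkeleton C).obj Z)} ≃ {Y : α // g Y = Z} :=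
      { toFun := fun Y => ⟨⟨Y.1, Y.2.1⟩, toSkeleton_eq_iff.mpr Y.2.2⟩
        invFun := fun p => ⟨p.1.1, p.1.2, toSkeleton_eq_iff.mp p.2⟩
        left_inv := fun Y => rfl
        right_inv := fun p => rfl }
    rw [show hallNumber ((fromSkeleton C).obj Z) B X = Nat.card
      {Y : Subobject X // Nonempty ((Y : C) ≅ B) ∧
        Nonempty (cokernel Y.arrow ≅ (fromSkeleton C).obj Z)} from rfl,
      Nat.card_congr eFib, Nat.card_eq_fintype_card, Fintype.card_subtype]
  have hallM : ∀ Y : α, hallNumber X' Cm ((fromSkeleton C).obj (g Y))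
      = hallNumber X' Cm (cokernel Y.1.arrow) :=
    fun Y => hallNumber_congr_M (fromSkeletonToSkeletonIso (cokernel Y.1.arrow))
  have hsupp : (Function.support fun Z : Skeleton C =>
      (hallNumber X' Cm ((fromSkeleton C).obj Z) : ℤ) *
        (hallNumber ((fromSkeleton C).obj Z) B X : ℤ))
      ⊆ ↑(Finset.image g Finset.univ) := by
    intro Z hZ
    simp only [Function.mem_support] at hZ
    have h2 : ((hallNumber ((fromSkeleton C).obj Z) B X : ℤ)) ≠ 0 :=
      right_ne_zero_of_mul hZ
    have h3 : hallNumber ((fromSkeleton C).obj Z) B X ≠ 0 := by exact_mod_cast h2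
    rw [card_fiber Z] at h3
    obtain ⟨Y, hY⟩ := Finset.card_ne_zero.mp h3
    exact Finset.mem_coe.mpr (Finset.mem_image.mpr
      ⟨Y, Finset.mem_univ Y, (Finset.mem_filter.mp hY).2⟩)
  rw [finsum_eq_finset_sum_of_support_subset _ hsupp]
  have step : ∀ Z ∈ Finset.image g Finset.univ,
      (hallNumber X' Cm ((fromSkeleton C).obj Z) : ℤ) *
        (hallNumber ((fromSkeleton C).obj Z) B X : ℤ)
      = ∑ Y ∈ Finset.univ.filter (fun Y : α => g Y = Z),
          (hallNumber X' Cm (cokernel Y.1.arrow) : ℤ) := by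
    intro Z _
    rw [card_fiber Z]
    rw [Finset.sum_congr rfl (fun Y hY => ?_), Finset.sum_const, nsmul_eq_mul, mul_comm]
    rw [← (Finset.mem_filter.mp hY).2]
    exact_mod_cast (hallM Y).symm
  rw [Finset.sum_congr rfl step,
    Finset.sum_fiberwise_of_maps_to (fun Y _ => Finset.mem_image_of_mem g (Finset.mem_univ Y))]
  have hcard : Nat.card ((Y : α) × {W : Subobject (cokernel Y.1.arrow) //
      Nonempty ((W : C) ≅ Cm) ∧ Nonempty (cokernel W.arrow ≅ X')})
      = ∑ Y : α, hallNumber X' Cm (cokernel Y.1.arrow) := by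
    haveI : ∀ Y : α, Fintype {W : Subobject (cokernel Y.1.arrow) //
        Nonempty ((W : C) ≅ Cm) ∧ Nonempty (cokernel W.arrow ≅ X')} := fun Y => by
      haveI := finite_sset (C := C) X' Cm (cokernel Y.1.arrow)
      exact Fintype.ofFinite _
    rw [Nat.card_eq_fintype_card, Fintype.card_sigma]
    exact Finset.sum_congr rfl fun Y _ => Nat.card_eq_fintype_card.symm
  rw [hcard]
  push_cast
  rfl

end Counting

/-! ### The three descriptions of chains of subobjects -/

/-- The predicate describing a chain `Y ≤ Y' ≤ X` with `Y ≅ B`, `Y'/Y ≅ Cm`, `X/Y' ≅ X'`. -/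
def TTcond (X X' B Cm : C) (p : Subobject X × Subobject X) : Prop :=
  ∃ h : p.1 ≤ p.2, Nonempty ((p.1 : C) ≅ B) ∧
    Nonempty (cokernel (Subobject.ofLE p.1 p.2 h) ≅ Cm) ∧
    Nonempty (cokernel p.2.arrow ≅ X')

lemma ofLE_mk_comp {X : C} (Y' : Subobject X) (Y₀ : Subobject ((Y' : C)))
    (h : Subobject.mk (Y₀.arrow ≫ Y'.arrow) ≤ Y') :
    Subobject.ofLE _ _ h = (Subobject.underlyingIso (Y₀.arrow ≫ Y'.arrow)).hom ≫ Y₀.arrow := by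
  rw [← cancel_mono Y'.arrow, Subobject.ofLE_arrow, Category.assoc,
    Subobject.underlyingIso_hom_comp_eq_mk]

lemma mk_ofLE_eq {X : C} (Y' : Subobject X) (Y₀ : Subobject ((Y' : C)))
    (h : Subobject.mk (Y₀.arrow ≫ Y'.arrow) ≤ Y') :
    Subobject.mk (Subobject.ofLE _ _ h) = Y₀ :=
  (Subobject.mk_eq_mk_of_comm _ _ (Subobject.underlyingIso _)
    (ofLE_mk_comp Y' Y₀ h).symm).trans (Subobject.mk_arrow Y₀)

lemma mk_mkArrow_comp {X : C} (Y Y' : Subobject X) (h : Y ≤ Y') :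
    Subobject.mk ((Subobject.mk (Subobject.ofLE Y Y' h)).arrow ≫ Y'.arrow) = Y := by
  have w : (Subobject.underlyingIso (Subobject.ofLE Y Y' h)).hom ≫ Y.arrow
      = (Subobject.mk (Subobject.ofLE Y Y' h)).arrow ≫ Y'.arrow := by
    rw [← Subobject.ofLE_arrow h, ← Category.assoc, Subobject.underlyingIso_hom_comp_eq_mk]
  exact (Subobject.mk_eq_mk_of_comm _ _ (Subobject.underlyingIso _) w).trans
    (Subobject.mk_arrow Y)



set_option maxHeartbeats 1000000 in
set_option synthInstance.maxHeartbeats 200000 in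
/-- First description: a subobject `Y ≅ B` of `X` together with a subobject of `X/Y`. -/
noncomputable def t1Equiv (X X' B Cm : C) :
    ((Y : {Y : Subobject X // Nonempty ((Y : C) ≅ B)}) ×
      {W : Subobject (cokernel Y.1.arrow) //
        Nonempty ((W : C) ≅ Cm) ∧ Nonempty (cokernel W.arrow ≅ X')}) ≃
    {p : Subobject X × Subobject X // TTcond X X' B Cm p} where
  toFun := fun ⟨⟨Y, hB⟩, ⟨W, hW⟩⟩ =>
    ⟨(Y, kernelSubobject (cokernel.π Y.arrow ≫ cokernel.π W.arrow)),
      le_kernelSubobject _ _ (by rw [← Category.assoc, cokernel.condition, zero_comp]),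
      hB,
      hW.1.map (fun i => cokernelOfLEIso Y _ _ ≪≫
        Subobject.isoOfEq _ _
          (imageSubobject_kernelSubobject_eq (cokernel.π Y.arrow) W) ≪≫ i),
      hW.2.map (fun i =>
        cokernelKernelSubobjectArrowIso (cokernel.π Y.arrow ≫ cokernel.π W.arrow) ≪≫ i)⟩
  invFun := fun ⟨⟨Y, Y'⟩, hp⟩ =>
    ⟨⟨Y, hp.choose_spec.1⟩,
      ⟨imageSubobject (Y'.arrow ≫ cokernel.π Y.arrow),
        hp.choose_spec.2.1.map (fun i => (cokernelOfLEIso Y Y' hp.choose).symm ≪≫ i),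
        hp.choose_spec.2.2.map (fun i =>
          (cokernelKernelSubobjectArrowIso (cokernel.π Y.arrow ≫
            cokernel.π (imageSubobject (Y'.arrow ≫ cokernel.π Y.arrow)).arrow)).symm ≪≫
          cokernelArrowIsoOfEq (kernelSubobject_imageSubobject_eq (cokernel.π Y.arrow) Y'
            (by rw [kernelSubobject_cokernelπ_arrow]; exact hp.choose)) ≪≫ i)⟩⟩
  left_inv := fun ⟨⟨Y, hB⟩, ⟨W, hW⟩⟩ => by
    refine Sigma.ext rfl (heq_of_eq (Subtype.ext ?_))
    exact imageSubobject_kernelSubobject_eq (cokernel.π Y.arrow) W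
  right_inv := fun ⟨⟨Y, Y'⟩, hp⟩ => by
    refine Subtype.ext (Prod.ext rfl ?_)
    exact kernelSubobject_imageSubobject_eq (cokernel.π Y.arrow) Y'
      (by rw [kernelSubobject_cokernelπ_arrow]; exact hp.choose)

set_option maxHeartbeats 1000000 in
set_option synthInstance.maxHeartbeats 200000 in
/-- Second description: a subobject `Y'` of `X` with `X/Y' ≅ X'` together with a
subobject of `Y'`. -/
noncomputable def t2Equiv (X X' B Cm : C) :
    ((Y' : {Y' : Subobject X // Nonempty (cokernel Y'.arrow ≅ X')}) ×
      {Y₀ : Subobject ((Y'.1 : C)) //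
        Nonempty ((Y₀ : C) ≅ B) ∧ Nonempty (cokernel Y₀.arrow ≅ Cm)}) ≃
    {p : Subobject X × Subobject X // TTcond X X' B Cm p} where
  toFun := fun ⟨⟨Y', hX'⟩, ⟨Y₀, hY₀⟩⟩ =>
    ⟨(Subobject.mk (Y₀.arrow ≫ Y'.arrow), Y'),
      Subobject.mk_le_of_comm Y₀.arrow rfl,
      hY₀.1.map (fun i => Subobject.underlyingIso _ ≪≫ i),
      hY₀.2.map (fun i => cokernelIsoOfEq (ofLE_mk_comp Y' Y₀ _) ≪≫
        cokernelEpiComp _ _ ≪≫ i),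
      hX'⟩
  invFun := fun ⟨⟨Y, Y'⟩, hp⟩ =>
    ⟨⟨Y', hp.choose_spec.2.2⟩,
      ⟨Subobject.mk (Subobject.ofLE Y Y' hp.choose),
        hp.choose_spec.1.map (fun i => Subobject.underlyingIso _ ≪≫ i),
        hp.choose_spec.2.1.map (fun i => cokernelMkArrowIso _ ≪≫ i)⟩⟩
  left_inv := fun ⟨⟨Y', hX'⟩, ⟨Y₀, hY₀⟩⟩ => by
    refine Sigma.ext rfl (heq_of_eq (Subtype.ext ?_))
    exact mk_ofLE_eq Y' Y₀ _
  right_inv := fun ⟨⟨Y, Y'⟩, hp⟩ => by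
    refine Subtype.ext (Prod.ext ?_ rfl)
    exact mk_mkArrow_comp Y Y' hp.choose


/-! ### Evaluating the second description against an indicator Hall number -/

section Eval

variable [∀ X Y : C, Finite (X ⟶ Y)]

lemma card_T2_eval (X X' B Cm : C) (P : C → Prop)
    (hP1 : ∀ M : C, P M → hallNumber Cm B M = 1)
    (hP0 : ∀ M : C, ¬ P M → hallNumber Cm B M = 0) :
    Nat.card ((Y' : {Y' : Subobject X // Nonempty (cokernel Y'.arrow ≅ X')}) ×
        {Y₀ : Subobject ((Y'.1 : C)) //
          Nonempty ((Y₀ : C) ≅ B) ∧ Nonempty (cokernel Y₀.arrow ≅ Cm)})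
      = Nat.card {Y' : Subobject X //
          Nonempty (cokernel Y'.arrow ≅ X') ∧ P ((Y' : C))} := by
  classical
  have hsub : ∀ Y' : {Y' : Subobject X // Nonempty (cokernel Y'.arrow ≅ X')},
      {Y₀ : Subobject ((Y'.1 : C)) //
        Nonempty ((Y₀ : C) ≅ B) ∧ Nonempty (cokernel Y₀.arrow ≅ Cm)} →
      P ((Y'.1 : C)) := by
    intro Y' w
    by_contra h
    haveI := finite_sset (C := C) Cm B ((Y'.1 : C))
    have h0 : Nat.card {Y₀ : Subobject ((Y'.1 : C)) //
        Nonempty ((Y₀ : C) ≅ B) ∧ Nonempty (cokernel Y₀.arrow ≅ Cm)} = 0 := hP0 _ h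
    rcases Nat.card_eq_zero.mp h0 with h1 | h1
    · exact h1.false w
    · exact not_finite {Y₀ : Subobject ((Y'.1 : C)) //
        Nonempty ((Y₀ : C) ≅ B) ∧ Nonempty (cokernel Y₀.arrow ≅ Cm)}
  haveI huniq : ∀ y : {y : {Y' : Subobject X // Nonempty (cokernel Y'.arrow ≅ X')} //
      P ((y.1 : C))},
      Unique {Y₀ : Subobject ((y.1.1 : C)) //
        Nonempty ((Y₀ : C) ≅ B) ∧ Nonempty (cokernel Y₀.arrow ≅ Cm)} := by
    intro y
    have h1 : Nat.card {Y₀ : Subobject ((y.1.1 : C)) //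
        Nonempty ((Y₀ : C) ≅ B) ∧ Nonempty (cokernel Y₀.arrow ≅ Cm)} = 1 := hP1 _ y.2
    obtain ⟨hs, hn⟩ := Nat.card_eq_one_iff_unique.mp h1
    exact ⟨⟨hn.some⟩, fun a => hs.allEq a hn.some⟩
  calc Nat.card ((Y' : {Y' : Subobject X // Nonempty (cokernel Y'.arrow ≅ X')}) ×
        {Y₀ : Subobject ((Y'.1 : C)) //
          Nonempty ((Y₀ : C) ≅ B) ∧ Nonempty (cokernel Y₀.arrow ≅ Cm)})
      = Nat.card ((y : {y : {Y' : Subobject X // Nonempty (cokernel Y'.arrow ≅ X')} //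
          P ((y.1 : C))}) ×
          {Y₀ : Subobject ((y.1.1 : C)) //
            Nonempty ((Y₀ : C) ≅ B) ∧ Nonempty (cokernel Y₀.arrow ≅ Cm)}) :=
        (Nat.card_congr (Equiv.sigmaSubtypeEquivOfSubset _ _ hsub)).symm
    _ = Nat.card {y : {Y' : Subobject X // Nonempty (cokernel Y'.arrow ≅ X')} //
          P ((y.1 : C))} := Nat.card_congr (Equiv.sigmaUnique _ _)
    _ = Nat.card {Y' : Subobject X //
          Nonempty (cokernel Y'.arrow ≅ X') ∧ P ((Y' : C))} :=
        Nat.card_congr (Equiv.subtypeSubtypeEquivSubtypeInter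
          (fun Y' : Subobject X => Nonempty (cokernel Y'.arrow ≅ X'))
          (fun Y' : Subobject X => P ((Y' : C))))

end Eval

end HallRecAux

theorem hallNumber_orthogonal_pair_recursion
    (C : Type*) [Category C] [Abelian C]
    [∀ X Y : C, Finite (X ⟶ Y)]
    (E₁ E₂ E : C)
    (hE : ¬ Nonempty (E ≅ E₁ ⊞ E₂))
    (h₁₂ : ∀ Z : C, hallNumber E₁ E₂ Z =
      if Nonempty (Z ≅ E) ∨ Nonempty (Z ≅ E₁ ⊞ E₂) then 1 else 0)
    (h₂₁ : ∀ Z : C, hallNumber E₂ E₁ Z = if Nonempty (Z ≅ E₁ ⊞ E₂) then 1 else 0)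
    (X X' : C) :
    (hallNumber X' E X : ℤ) =
      (∑ᶠ Z₁ : Skeleton C,
        (hallNumber X' E₁ ((fromSkeleton C).obj Z₁) : ℤ) *
          hallNumber ((fromSkeleton C).obj Z₁) E₂ X) -
      (∑ᶠ Z₂ : Skeleton C,
        (hallNumber X' E₂ ((fromSkeleton C).obj Z₂) : ℤ) *
          hallNumber ((fromSkeleton C).obj Z₂) E₁ X) := by
  classical
  open HallRecAux in
  rw [finsum_hall_eq_card X X' E₂ E₁, finsum_hall_eq_card X X' E₁ E₂,
    Nat.card_congr ((t1Equiv X X' E₂ E₁).trans (t2Equiv X X' E₂ E₁).symm),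
    Nat.card_congr ((t1Equiv X X' E₁ E₂).trans (t2Equiv X X' E₁ E₂).symm),
    card_T2_eval X X' E₂ E₁ (fun M => Nonempty (M ≅ E) ∨ Nonempty (M ≅ E₁ ⊞ E₂))
      (fun M h => by rw [h₁₂ M, if_pos h]) (fun M h => by rw [h₁₂ M, if_neg h]),
    card_T2_eval X X' E₁ E₂ (fun M => Nonempty (M ≅ E₁ ⊞ E₂))
      (fun M h => by rw [h₂₁ M, if_pos h]) (fun M h => by rw [h₂₁ M, if_neg h])]
  have hdisj : ∀ Y' : Subobject X,
      Nonempty ((Y' : C) ≅ E) → Nonempty ((Y' : C) ≅ E₁ ⊞ E₂) → False := by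
    rintro Y' ⟨i⟩ ⟨j⟩
    exact hE ⟨i.symm ≪≫ j⟩
  have e : {Y' : Subobject X // Nonempty (cokernel Y'.arrow ≅ X') ∧
        (Nonempty ((Y' : C) ≅ E) ∨ Nonempty ((Y' : C) ≅ E₁ ⊞ E₂))} ≃
      ({Y' : Subobject X // Nonempty (cokernel Y'.arrow ≅ X') ∧ Nonempty ((Y' : C) ≅ E)} ⊕
        {Y' : Subobject X // Nonempty (cokernel Y'.arrow ≅ X') ∧
          Nonempty ((Y' : C) ≅ E₁ ⊞ E₂)}) :=
    { toFun := fun x => if h : Nonempty ((x.1 : C) ≅ E) then Sum.inl ⟨x.1, x.2.1, h⟩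
        else Sum.inr ⟨x.1, x.2.1, x.2.2.resolve_left h⟩
      invFun := fun x => x.elim (fun a => ⟨a.1, a.2.1, Or.inl a.2.2⟩)
        (fun a => ⟨a.1, a.2.1, Or.inr a.2.2⟩)
      left_inv := fun x => by
        by_cases h : Nonempty ((x.1 : C) ≅ E) <;> simp [h]
      right_inv := fun x => by
        cases x with
        | inl a => simp [a.2.2]
        | inr a =>
            have hna : ¬ Nonempty ((a.1 : C) ≅ E) := fun hp => hdisj a.1 hp a.2.2
            simp [hna] }
  haveI fE : Finite {Y' : Subobject X // Nonempty (cokernel Y'.arrow ≅ X') ∧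
      Nonempty ((Y' : C) ≅ E)} := by
    haveI := HallRecAux.finite_sset (C := C) X' E X
    exact Finite.of_equiv _ (Equiv.subtypeEquivRight (fun Y' => and_comm))
  haveI fD : Finite {Y' : Subobject X // Nonempty (cokernel Y'.arrow ≅ X') ∧
      Nonempty ((Y' : C) ≅ E₁ ⊞ E₂)} := by
    haveI := HallRecAux.finite_sset (C := C) X' (E₁ ⊞ E₂) X
    exact Finite.of_equiv _ (Equiv.subtypeEquivRight (fun Y' => and_comm))
  have hA : Nat.card {Y' : Subobject X // Nonempty (cokernel Y'.arrow ≅ X') ∧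
      Nonempty ((Y' : C) ≅ E)} = hallNumber X' E X :=
    Nat.card_congr (Equiv.subtypeEquivRight (fun Y' => and_comm))
  have hD : Nat.card {Y' : Subobject X // Nonempty (cokernel Y'.arrow ≅ X') ∧
      Nonempty ((Y' : C) ≅ E₁ ⊞ E₂)} = hallNumber X' (E₁ ⊞ E₂) X :=
    Nat.card_congr (Equiv.subtypeEquivRight (fun Y' => and_comm))
  have hor : Nat.card {Y' : Subobject X // Nonempty (cokernel Y'.arrow ≅ X') ∧
      (Nonempty ((Y' : C) ≅ E) ∨ Nonempty ((Y' : C) ≅ E₁ ⊞ E₂))}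
      = hallNumber X' E X + hallNumber X' (E₁ ⊞ E₂) X := by
    rw [Nat.card_congr e, Nat.card_sum, hA, hD]
  rw [hor, hD]
  push_cast
  ring
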